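/- arXiv:1806.09042 — 2 statements merged into one kernel-verified Lean document; each statement's English description precedes it below -/
import Mathlib

section
/- There is no unitary operator U on H ⊗ H (for a Hilbert space H of dimension at least 2, with a fixed 'blank' unit vector b) such that U(ψ ⊗ b) = ψ ⊗ ψ for all unit vectors ψ in H. -/
open scoped InnerProductSpace

/-- The tensor product of two vectors in `ℂ^n`, realized in `ℂ^(n × n)`. -/
noncomputable def tensorVec {n : ℕ} (ψ φ : EuclideanSpace ℂ (Fin n)) :
    EuclideanSpace ℂ (Fin n × Fin n) :=
  WithLp.toLp 2 (fun p => ψ p.1 * φ p.2)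

lemma inner_tensorVec {n : ℕ} (ψ φ x y : EuclideanSpace ℂ (Fin n)) :
    ⟪tensorVec ψ x, tensorVec φ y⟫_ℂ = ⟪ψ, φ⟫_ℂ * ⟪x, y⟫_ℂ := by
  simp only [PiLp.inner_apply, tensorVec, PiLp.toLp_apply, RCLike.inner_apply, map_mul,
    Fintype.sum_prod_type, Finset.mul_sum, Finset.sum_mul]
  rw [Finset.sum_comm]
  apply Finset.sum_congr rfl; intro i _
  apply Finset.sum_congr rfl; intro j _
  ring

/-- **No-cloning theorem**: for a Hilbert space of dimension at least 2 with a fixed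
"blank" unit vector `b`, there is no unitary `U` on `H ⊗ H` with
`U (ψ ⊗ b) = ψ ⊗ ψ` for every unit vector `ψ`. -/
theorem no_cloning {n : ℕ} (hn : 2 ≤ n) (b : EuclideanSpace ℂ (Fin n)) (hb : ‖b‖ = 1) :
    ¬ ∃ U : EuclideanSpace ℂ (Fin n × Fin n) ≃ₗᵢ[ℂ] EuclideanSpace ℂ (Fin n × Fin n),
      ∀ ψ : EuclideanSpace ℂ (Fin n), ‖ψ‖ = 1 → U (tensorVec ψ b) = tensorVec ψ ψ := by
  rintro ⟨U, hU⟩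
  have hbb : ⟪b, b⟫_ℂ = 1 := by
    rw [inner_self_eq_norm_sq_to_K, hb]; norm_num
  set i0 : Fin n := ⟨0, by omega⟩
  set i1 : Fin n := ⟨1, by omega⟩
  set e0 : EuclideanSpace ℂ (Fin n) := EuclideanSpace.single i0 1 with he0
  set e1 : EuclideanSpace ℂ (Fin n) := EuclideanSpace.single i1 1 with he1
  have hne : i0 ≠ i1 := by simp [i0, i1, Fin.ext_iff]
  set c : ℝ := (Real.sqrt 2)⁻¹ with hc
  have hc0 : (0:ℝ) < c := by positivity
  set φ : EuclideanSpace ℂ (Fin n) := (c : ℂ) • (e0 + e1) with hφ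
  have h00 : ⟪e0, e0⟫_ℂ = 1 := by
    simp [he0, EuclideanSpace.inner_single_left, EuclideanSpace.single_apply]
  have h01 : ⟪e0, e1⟫_ℂ = 0 := by
    simp [he0, he1, EuclideanSpace.inner_single_left, EuclideanSpace.single_apply, hne.symm]
  have h10 : ⟪e1, e0⟫_ℂ = 0 := by
    simp [he0, he1, EuclideanSpace.inner_single_left, EuclideanSpace.single_apply, hne]
  have h11 : ⟪e1, e1⟫_ℂ = 1 := by
    simp [he1, EuclideanSpace.inner_single_left, EuclideanSpace.single_apply]
  have hcr : c^2 * 2 = 1 := by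
    rw [hc, inv_pow, Real.sq_sqrt (by norm_num : (0:ℝ) ≤ 2)]
    norm_num
  have hc2 : (c:ℂ)^2 * 2 = 1 := by exact_mod_cast hcr
  have hφφ : ⟪φ, φ⟫_ℂ = 1 := by
    rw [hφ, inner_smul_left, inner_smul_right, inner_add_left, inner_add_right,
      inner_add_right, h00, h01, h10, h11]
    simp only [Complex.conj_ofReal]
    linear_combination hc2
  have hnφ : ‖φ‖ = 1 := by
    have := @norm_eq_sqrt_re_inner ℂ _ _ _ _ φ
    rw [hφφ] at this
    simpa using this
  have hne0 : ‖e0‖ = 1 := by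
    have := @norm_eq_sqrt_re_inner ℂ _ _ _ _ e0
    rw [h00] at this
    simpa using this
  have h0φ : ⟪e0, φ⟫_ℂ = (c:ℂ) := by
    rw [hφ, inner_smul_right, inner_add_right, h00, h01]; ring
  have key : ⟪tensorVec e0 b, tensorVec φ b⟫_ℂ
      = ⟪tensorVec e0 e0, tensorVec φ φ⟫_ℂ := by
    rw [← hU e0 hne0, ← hU φ hnφ, LinearIsometryEquiv.inner_map_map]
  rw [inner_tensorVec, inner_tensorVec, hbb, mul_one, h0φ] at key
  -- key : (c:ℂ) = c * c
  have hsq : (c:ℂ)^2 = c := by rw [sq]; exact key.symm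
  rw [hsq] at hc2
  have hchalf : (c:ℂ) = 1/2 := by linear_combination hc2/2
  rw [hchalf] at hsq
  norm_num at hsq
end

section
/- With U = ∑_a P_a ⊗ X'_{ap} as above, one has U*(I ⊗ P'_p)U = ∑_a P_a ⊗ P'_a, and for c ≠ p, U*(I ⊗ P'_c)U = P_c ⊗ P'_p + (I − P_c) ⊗ P'_c. -/
open Finset Matrix
open scoped Kronecker

variable {n m : ℕ} {ι : Type*} [Fintype ι] [DecidableEq ι]

/-- The rank-one projection `|Ψₐ⟩⟨Ψₐ|` associated to the vector `Ψ a`. -/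
def probeProj (Ψ : ι → Fin m → ℂ) (a : ι) : Matrix (Fin m) (Fin m) ℂ :=
  vecMulVec (Ψ a) (star (Ψ a))

/-- The operator `X'_{ab}` swapping `Ψ a` and `Ψ b` and acting as the identity on the
orthogonal complement: `X'_{ab} = |Ψ_b⟩⟨Ψ_a| + |Ψ_a⟩⟨Ψ_b| + ∑_{c ≠ a,b} |Ψ_c⟩⟨Ψ_c|`
for `a ≠ b`, and `X'_{aa} = I`. -/
noncomputable def probeSwap (Ψ : ι → Fin m → ℂ) (a b : ι) : Matrix (Fin m) (Fin m) ℂ :=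
  if a = b then 1 else
    vecMulVec (Ψ b) (star (Ψ a)) + vecMulVec (Ψ a) (star (Ψ b)) +
      ∑ c ∈ univ.filter (fun c => c ≠ a ∧ c ≠ b), vecMulVec (Ψ c) (star (Ψ c))

/-- The interaction unitary `U = ∑ₐ Pₐ ⊗ X'_{ap}`. -/
noncomputable def probeUnitary (P : ι → Matrix (Fin n) (Fin n) ℂ) (Ψ : ι → Fin m → ℂ) (p : ι) :
    Matrix (Fin n × Fin m) (Fin n × Fin m) ℂ :=
  ∑ a, (P a) ⊗ₖ (probeSwap Ψ a p)

/- ### Auxiliary lemmas -/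

lemma vecMulVec_mulVec' (u v w : Fin m → ℂ) :
    vecMulVec u v *ᵥ w = (v ⬝ᵥ w) • u := by
  ext i
  simp only [mulVec, dotProduct, vecMulVec_apply, Pi.smul_apply, smul_eq_mul, Finset.sum_mul]
  exact Finset.sum_congr rfl fun x _ => by ring

lemma mul_vecMulVec (A : Matrix (Fin m) (Fin m) ℂ) (u v : Fin m → ℂ) :
    A * vecMulVec u v = vecMulVec (A *ᵥ u) v := by
  ext i j
  simp [mul_apply, vecMulVec_apply, mulVec, dotProduct, Finset.sum_mul, mul_assoc]

lemma vecMulVec_mul (u v : Fin m → ℂ) (A : Matrix (Fin m) (Fin m) ℂ) :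
    vecMulVec u v * A = vecMulVec u (v ᵥ* A) := by
  ext i j
  simp [mul_apply, vecMulVec_apply, vecMul, dotProduct, Finset.mul_sum, mul_assoc]

lemma vecMulVec_conjTranspose (u v : Fin m → ℂ) :
    (vecMulVec u v)ᴴ = vecMulVec (star v) (star u) := by
  ext i j
  simp [conjTranspose_apply, vecMulVec_apply, mul_comm]

lemma probeSwap_conjTranspose (Ψ : ι → Fin m → ℂ) (a p : ι) :
    (probeSwap Ψ a p)ᴴ = probeSwap Ψ a p := by
  unfold probeSwap
  split_ifs with h
  · simp
  · simp only [conjTranspose_add, conjTranspose_sum, vecMulVec_conjTranspose, star_star]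
    rw [add_comm (vecMulVec (Ψ a) (star (Ψ p))) (vecMulVec (Ψ p) (star (Ψ a)))]

/-- Where the swap sends each basis index. -/
def swapIdx (a p x : ι) : ι := if x = a then p else if x = p then a else x

lemma sum_mulVec' (s : Finset ι) (A : ι → Matrix (Fin m) (Fin m) ℂ) (v : Fin m → ℂ) :
    (∑ a ∈ s, A a) *ᵥ v = ∑ a ∈ s, A a *ᵥ v := by
  ext i
  simp only [mulVec, dotProduct, Matrix.sum_apply, Finset.sum_apply, Finset.sum_mul]
  exact Finset.sum_comm

lemma probeSwap_mulVec (Ψ : ι → Fin m → ℂ)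
    (hΨon : ∀ a b, star (Ψ a) ⬝ᵥ Ψ b = if a = b then 1 else 0) (a p x : ι) :
    probeSwap Ψ a p *ᵥ Ψ x = Ψ (swapIdx a p x) := by
  by_cases h : a = p
  · subst h
    rw [probeSwap, if_pos rfl, Matrix.one_mulVec]
    have : swapIdx a a x = x := by
      unfold swapIdx; split_ifs with h1 h2 <;> simp_all
    rw [this]
  · rw [probeSwap, if_neg h]
    simp only [Matrix.add_mulVec, sum_mulVec', vecMulVec_mulVec', hΨon]
    unfold swapIdx
    by_cases h1 : x = a
    · subst h1
      rw [if_pos rfl, if_pos rfl, if_neg (fun hh => h hh.symm), Finset.sum_eq_zero]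
      · simp
      · intro c hc
        simp only [Finset.mem_filter] at hc
        rw [if_neg hc.2.1, zero_smul]
    · by_cases h2 : x = p
      · subst h2
        rw [if_neg h1, if_pos rfl, if_neg (fun hh => h1 hh.symm), if_pos rfl,
          Finset.sum_eq_zero]
        · simp
        · intro c hc
          simp only [Finset.mem_filter] at hc
          rw [if_neg hc.2.2, zero_smul]
      · rw [if_neg h1, if_neg h2, if_neg (fun hh => h1 hh.symm),
          if_neg (fun hh => h2 hh.symm), Finset.sum_eq_single x]
        · simp
        · intro c hc hcx
          rw [if_neg hcx, zero_smul]
        · intro hx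
          simp [Finset.mem_filter, h1, h2] at hx

lemma probeSwap_conj_proj (Ψ : ι → Fin m → ℂ)
    (hΨon : ∀ a b, star (Ψ a) ⬝ᵥ Ψ b = if a = b then 1 else 0) (a p x : ι) :
    probeSwap Ψ a p * probeProj Ψ x * probeSwap Ψ a p = probeProj Ψ (swapIdx a p x) := by
  have h1 : probeSwap Ψ a p * probeProj Ψ x =
      vecMulVec (Ψ (swapIdx a p x)) (star (Ψ x)) := by
    rw [probeProj, mul_vecMulVec, probeSwap_mulVec Ψ hΨon]
  rw [h1, vecMulVec_mul]
  have h2 : star (Ψ x) ᵥ* probeSwap Ψ a p = star (Ψ (swapIdx a p x)) := by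
    have := Matrix.star_mulVec (probeSwap Ψ a p) (Ψ x)
    rw [probeSwap_conjTranspose] at this
    rw [← this, probeSwap_mulVec Ψ hΨon]
  rw [h2, probeProj]

lemma kronecker_conjTranspose (A : Matrix (Fin n) (Fin n) ℂ) (B : Matrix (Fin m) (Fin m) ℂ) :
    (A ⊗ₖ B)ᴴ = Aᴴ ⊗ₖ Bᴴ := by
  ext i j
  simp [conjTranspose_apply, kronecker_apply, mul_comm]

lemma sum_kronecker_left (s : Finset ι) (A : ι → Matrix (Fin n) (Fin n) ℂ)
    (B : Matrix (Fin m) (Fin m) ℂ) :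
    (∑ a ∈ s, A a) ⊗ₖ B = ∑ a ∈ s, (A a) ⊗ₖ B := by
  ext i j
  simp [kroneckerMap_apply, Matrix.sum_apply, Finset.sum_mul]

lemma probeUnitary_conj_general (P : ι → Matrix (Fin n) (Fin n) ℂ) (Ψ : ι → Fin m → ℂ) (p : ι)
    (hherm : ∀ a, (P a)ᴴ = P a) (hidem : ∀ a, P a * P a = P a)
    (horth : ∀ a b, a ≠ b → P a * P b = 0) (Q : Matrix (Fin m) (Fin m) ℂ) :
    (probeUnitary P Ψ p)ᴴ * ((1 : Matrix (Fin n) (Fin n) ℂ) ⊗ₖ Q) * probeUnitary P Ψ p =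
      ∑ a, (P a) ⊗ₖ (probeSwap Ψ a p * Q * probeSwap Ψ a p) := by
  unfold probeUnitary
  rw [conjTranspose_sum]
  simp only [kronecker_conjTranspose, hherm]
  rw [Finset.sum_mul, Finset.sum_mul]
  refine Finset.sum_congr rfl fun a _ => ?_
  rw [Finset.mul_sum]
  rw [Finset.sum_eq_single a]
  · rw [← mul_kronecker_mul, ← mul_kronecker_mul, mul_one, hidem, probeSwap_conjTranspose]
  · intro b _ hba
    rw [← mul_kronecker_mul, ← mul_kronecker_mul, mul_one, horth a b (Ne.symm hba),
      zero_kronecker]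
  · simp

/-- `U*(I ⊗ P'_p)U = ∑ₐ Pₐ ⊗ P'ₐ`, and for `c ≠ p`,
`U*(I ⊗ P'_c)U = P_c ⊗ P'_p + (I − P_c) ⊗ P'_c`. -/
theorem probeUnitary_conj (P : ι → Matrix (Fin n) (Fin n) ℂ) (Ψ : ι → Fin m → ℂ) (p : ι)
    (hherm : ∀ a, (P a)ᴴ = P a) (hidem : ∀ a, P a * P a = P a)
    (horth : ∀ a b, a ≠ b → P a * P b = 0) (hsum : ∑ a, P a = 1)
    (hΨon : ∀ a b, star (Ψ a) ⬝ᵥ Ψ b = if a = b then 1 else 0)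
    (hΨcomplete : ∑ c, probeProj Ψ c = 1) :
    (probeUnitary P Ψ p)ᴴ * ((1 : Matrix (Fin n) (Fin n) ℂ) ⊗ₖ probeProj Ψ p) *
        probeUnitary P Ψ p = ∑ a, (P a) ⊗ₖ probeProj Ψ a ∧
      ∀ c, c ≠ p →
        (probeUnitary P Ψ p)ᴴ * ((1 : Matrix (Fin n) (Fin n) ℂ) ⊗ₖ probeProj Ψ c) *
            probeUnitary P Ψ p =
          (P c) ⊗ₖ probeProj Ψ p + ((1 : Matrix (Fin n) (Fin n) ℂ) - P c) ⊗ₖ probeProj Ψ c := by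
  constructor
  · rw [probeUnitary_conj_general P Ψ p hherm hidem horth]
    refine Finset.sum_congr rfl fun a _ => ?_
    rw [probeSwap_conj_proj Ψ hΨon]
    have : swapIdx a p p = a := by
      unfold swapIdx; split_ifs with h1 h2 <;> simp_all
    rw [this]
  · intro c hc
    rw [probeUnitary_conj_general P Ψ p hherm hidem horth]
    have key : ∀ a, probeSwap Ψ a p * probeProj Ψ c * probeSwap Ψ a p =
        probeProj Ψ (if a = c then p else c) := by
      intro a
      rw [probeSwap_conj_proj Ψ hΨon]
      have : swapIdx a p c = if a = c then p else c := by
        unfold swapIdx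
        by_cases h : a = c
        · subst h; simp
        · rw [if_neg (fun hh => h hh.symm), if_neg hc, if_neg h]
      rw [this]
    simp only [key]
    rw [← Finset.add_sum_erase _ _ (Finset.mem_univ c), if_pos rfl]
    congr 1
    have : ∑ a ∈ Finset.univ.erase c, (P a) ⊗ₖ probeProj Ψ (if a = c then p else c) =
        ∑ a ∈ Finset.univ.erase c, (P a) ⊗ₖ probeProj Ψ c := by
      refine Finset.sum_congr rfl fun a ha => ?_
      rw [if_neg (Finset.mem_erase.mp ha).1]
    rw [this]
    have h1 : P c + ∑ a ∈ Finset.univ.erase c, P a = 1 := by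
      rw [Finset.add_sum_erase _ _ (Finset.mem_univ c), hsum]
    have hsub : ((1 : Matrix (Fin n) (Fin n) ℂ) - P c) = ∑ a ∈ Finset.univ.erase c, P a := by
      rw [← h1]; abel
    rw [hsub, sum_kronecker_left]
end
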